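/- For any graph G on n vertices with Laplacian eigenvalues 0 = λ₁ ≤ ... ≤ λ_n and any partition [n] = P₁ ∪ ... ∪ P_k into nonempty sets, λ_{n-k+1} + ... + λ_n ≥ Σ_{1≤i<j≤k} e(Pᵢ,Pⱼ)(1/|Pᵢ| + 1/|Pⱼ|). -/

import Mathlib

open Finset

/-- rotate a triple sum. -/
lemma sum_rot_aux {α β γ : Type*} [Fintype α] [Fintype β] [Fintype γ]
    (F : α → β → γ → ℝ) :
    ∑ a, ∑ b, ∑ c, F a b c = ∑ c, ∑ a, ∑ b, F a b c := by
  have h : ∀ a, ∑ b, ∑ c, F a b c = ∑ c, ∑ b, F a b c := fun a => Finset.sum_comm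
  simp_rw [h]
  exact Finset.sum_comm

/-- sum of product of sums, expanded. -/
lemma sum_prod_sum_aux {α β : Type*} [Fintype α] [Fintype β] (f g : α → β → ℝ) :
    ∑ b, (∑ a, f a b) * (∑ a, g a b) = ∑ a, ∑ a', ∑ b, f a b * g a' b := by
  have h : ∀ b : β, (∑ a, f a b) * (∑ a, g a b) = ∑ a, ∑ a', f a b * g a' b := by
    intro b
    rw [Finset.sum_mul_sum]
  simp_rw [h]
  exact (sum_rot_aux _).symm

/-- quadratic form through spectral decomposition. -/
lemma quad_aux {n : ℕ} (M : Matrix (Fin n) (Fin n) ℝ) (x μ : Fin n → ℝ) :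
    ∑ u, ∑ v, x u * (∑ j, μ j * (M u j * M v j)) * x v
      = ∑ j, μ j * (∑ u, M u j * x u) ^ 2 := by
  have h : ∀ j, μ j * (∑ u, M u j * x u) ^ 2
      = ∑ u, ∑ v, x u * (μ j * (M u j * M v j)) * x v := by
    intro j
    rw [sq, Finset.sum_mul_sum, Finset.mul_sum]
    refine Finset.sum_congr rfl fun u _ => ?_
    rw [Finset.mul_sum]
    exact Finset.sum_congr rfl fun v _ => by ring
  simp_rw [h]
  simp_rw [Finset.mul_sum, Finset.sum_mul]
  exact sum_rot_aux _

/-- threshold inequality. -/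
lemma thresh_aux {n : ℕ} (lam t : Fin n → ℝ) (T : Finset (Fin n)) (θ : ℝ)
    (hT1 : ∀ j ∈ T, θ ≤ lam j) (hT2 : ∀ j ∉ T, lam j ≤ θ)
    (ht0 : ∀ j, 0 ≤ t j) (ht1 : ∀ j, t j ≤ 1)
    (htot : ∑ j, t j = T.card) :
    ∑ j, lam j * t j ≤ ∑ j ∈ T, lam j := by
  have hsplit := Finset.sum_add_sum_compl T (fun j => lam j * t j)
  have hsplit2 := Finset.sum_add_sum_compl T t
  have h1 : ∑ j ∈ Tᶜ, lam j * t j ≤ ∑ j ∈ Tᶜ, θ * t j :=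
    Finset.sum_le_sum fun j hj =>
      mul_le_mul_of_nonneg_right (hT2 j (by simpa using hj)) (ht0 j)
  have h2 : ∑ j ∈ T, θ * (1 - t j) ≤ ∑ j ∈ T, lam j * (1 - t j) :=
    Finset.sum_le_sum fun j hj =>
      mul_le_mul_of_nonneg_right (hT1 j hj) (by linarith [ht1 j])
  have e1 : ∑ j ∈ T, (1 - t j) = (T.card : ℝ) - ∑ j ∈ T, t j := by
    rw [Finset.sum_sub_distrib]; simp
  have h3 : ∑ j ∈ Tᶜ, θ * t j = ∑ j ∈ T, θ * (1 - t j) := by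
    rw [← Finset.mul_sum, ← Finset.mul_sum]
    have : ∑ j ∈ Tᶜ, t j = ∑ j ∈ T, (1 - t j) := by rw [e1]; linarith
    rw [this]
  have h4 : ∑ j ∈ T, (lam j * t j + lam j * (1 - t j)) = ∑ j ∈ T, lam j :=
    Finset.sum_congr rfl fun j _ => by ring
  rw [Finset.sum_add_distrib] at h4
  linarith

/-- cardinality of the top segment of `Fin n`. -/
lemma card_top_aux {n m : ℕ} :
    (Finset.univ.filter (fun j : Fin n => m ≤ (j : ℕ))).card = n - m := by
  rw [← Nat.card_Ico m n]
  apply Finset.card_bij (fun (j : Fin n) _ => (j : ℕ))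
  · intro j hj
    simp only [Finset.mem_filter] at hj
    exact Finset.mem_Ico.mpr ⟨hj.2, j.isLt⟩
  · intro a _ b _ h; exact Fin.ext h
  · intro a ha
    rw [Finset.mem_Ico] at ha
    exact ⟨⟨a, ha.2⟩, by simp [ha.1], rfl⟩

def partSet {n k : ℕ} (P : Fin n → Fin k) (i : Fin k) : Finset (Fin n) :=
  Finset.univ.filter (fun v => P v = i)

def pairCount {n : ℕ} (G : SimpleGraph (Fin n)) [DecidableRel G.Adj]
    (X Y : Finset (Fin n)) : ℕ :=
  ∑ u ∈ X, ∑ v ∈ Y, if G.Adj u v then 1 else 0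

/-- for the increasing sequence `lam` of Laplacian eigenvalues,
`λ_{n-k+1} + ⋯ + λ_n ≥ ∑_{i<j} e(P i, P j)(1/|P i| + 1/|P j|)`
(0-based indices `n - k ≤ j ≤ n - 1`). -/
theorem stmt3 {n k : ℕ} (hk : 1 < k) (hkn : k < n)
    (G : SimpleGraph (Fin n)) [DecidableRel G.Adj]
    (hL : (G.lapMatrix ℝ).IsHermitian)
    (lam : Fin n → ℝ) (hmono : Monotone lam)
    (hperm : ∃ σ : Equiv.Perm (Fin n), lam = hL.eigenvalues ∘ σ)
    (P : Fin n → Fin k) (hsurj : Function.Surjective P) :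
    ∑ p ∈ Finset.univ.filter (fun p : Fin k × Fin k => p.1 < p.2),
        (pairCount G (partSet P p.1) (partSet P p.2) : ℝ) *
          (1 / (partSet P p.1).card + 1 / (partSet P p.2).card)
      ≤ ∑ j ∈ Finset.univ.filter (fun j : Fin n => n - k ≤ (j : ℕ)), lam j := by
  classical
  obtain ⟨σ, hlam⟩ := hperm
  -- spectral data
  set U : Matrix (Fin n) (Fin n) ℝ := (hL.eigenvectorUnitary : Matrix (Fin n) (Fin n) ℝ)
    with hUdef
  set μ : Fin n → ℝ := hL.eigenvalues with hμdef
  have hUU : U * star U = 1 := (Matrix.mem_unitaryGroup_iff).mp hL.eigenvectorUnitary.2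
  have hUU' : star U * U = 1 := (Matrix.mem_unitaryGroup_iff').mp hL.eigenvectorUnitary.2
  have hrow : ∀ u v : Fin n, ∑ j, U u j * U v j = if u = v then 1 else 0 := by
    intro u v
    have h := congrFun (congrFun hUU u) v
    simpa [Matrix.mul_apply, Matrix.one_apply, Matrix.star_apply] using h
  have hcol : ∀ j j' : Fin n, ∑ u, U u j * U u j' = if j = j' then 1 else 0 := by
    intro j j'
    have h := congrFun (congrFun hUU' j) j'
    simp only [Matrix.mul_apply, Matrix.one_apply, Matrix.star_apply, star_trivial] at h
    simpa [mul_comm] using h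
  have hLap : ∀ u v : Fin n, G.lapMatrix ℝ u v = ∑ j, μ j * (U u j * U v j) := by
    intro u v
    have h := congrFun (congrFun hL.spectral_theorem u) v
    rw [h]
    simp only [Unitary.conjStarAlgAut_apply, Matrix.mul_apply, Matrix.mul_diagonal, Matrix.diagonal_apply,
      Matrix.star_apply, star_trivial, Function.comp_apply, RCLike.ofReal_real_eq_id, id,
      mul_ite, mul_zero, Finset.sum_ite_eq', Finset.mem_univ, if_true]
    exact Finset.sum_congr rfl fun j _ => by ring
  -- combinatorial data
  set c : Fin k → ℝ := fun i => ((partSet P i).card : ℝ) with hcdef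
  have hcpos : ∀ i, 0 < c i := by
    intro i
    have hne : (partSet P i).Nonempty := by
      obtain ⟨v, hv⟩ := hsurj i
      exact ⟨v, by simp [partSet, hv]⟩
    have := Finset.card_pos.mpr hne
    simp only [hcdef]
    exact_mod_cast this
  set w : Fin k → Fin n → ℝ := fun i u => (if P u = i then 1 else 0) / Real.sqrt (c i)
    with hwdef
  have hind : ∀ i, ∑ u, (if P u = i then (1:ℝ) else 0) = c i := by
    intro i; rw [Finset.sum_boole]; simp [hcdef, partSet]
  have hwsq : ∀ i u, w i u * w i u = (if P u = i then (1:ℝ) else 0) / c i := by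
    intro i u
    simp only [hwdef, div_mul_div_comm, Real.mul_self_sqrt (hcpos i).le]
    by_cases h : P u = i <;> simp [h]
  have horth : ∀ i i', ∑ u, w i u * w i' u = if i = i' then 1 else 0 := by
    intro i i'
    by_cases h : i = i'
    · subst h
      rw [if_pos rfl]
      simp_rw [hwsq]
      rw [← Finset.sum_div, hind]
      exact div_self (hcpos i).ne'
    · rw [if_neg h]
      apply Finset.sum_eq_zero
      intro u _
      by_cases h1 : P u = i
      · have h2 : P u ≠ i' := h1 ▸ h
        simp [hwdef, h2]
      · simp [hwdef, h1]
  have hEexp : ∀ i j : Fin k, (pairCount G (partSet P i) (partSet P j) : ℝ)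
      = ∑ u, ∑ v, (if P u = i then (1:ℝ) else 0) *
          ((if P v = j then 1 else 0) * (if G.Adj u v then 1 else 0)) := by
    intro i j
    rw [pairCount, partSet, partSet]
    push_cast
    rw [Finset.sum_filter]
    refine Finset.sum_congr rfl fun u _ => ?_
    by_cases h : P u = i
    · rw [if_pos h, Finset.sum_filter]
      refine Finset.sum_congr rfl fun v _ => ?_
      by_cases h2 : P v = j
      · simp [h, h2]
      · simp [h, h2]
    · simp [h]
  have hEsymm : ∀ i j : Fin k, pairCount G (partSet P i) (partSet P j)
      = pairCount G (partSet P j) (partSet P i) := by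
    intro i j
    rw [pairCount, pairCount, Finset.sum_comm]
    exact Finset.sum_congr rfl fun v _ => Finset.sum_congr rfl fun u _ =>
      if_congr (G.adj_comm u v) rfl rfl
  have hdeg : ∀ u, (G.degree u : ℝ) = ∑ v, if G.Adj u v then (1:ℝ) else 0 := by
    intro u
    rw [Finset.sum_boole]
    congr 1
    simp [SimpleGraph.degree, SimpleGraph.neighborFinset_eq_filter]
  have hww : ∀ i u v, w i u * w i v
      = (if P u = i then (1:ℝ) else 0) * (if P v = i then 1 else 0) / c i := by
    intro i u v
    simp only [hwdef, div_mul_div_comm, Real.mul_self_sqrt (hcpos i).le]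
  have hadjpart : ∀ i, ∑ u, ∑ v, w i u * G.adjMatrix ℝ u v * w i v
      = (pairCount G (partSet P i) (partSet P i) : ℝ) / c i := by
    intro i
    rw [hEexp i i, Finset.sum_div]
    refine Finset.sum_congr rfl fun u _ => ?_
    rw [Finset.sum_div]
    refine Finset.sum_congr rfl fun v _ => ?_
    rw [SimpleGraph.adjMatrix_apply]
    have h1 : w i u * (if G.Adj u v then (1:ℝ) else 0) * w i v
        = (w i u * w i v) * (if G.Adj u v then 1 else 0) := by ring
    rw [h1, hww]
    ring
  have hdiagpart : ∀ i, ∑ u, ∑ v, w i u * G.degMatrix ℝ u v * w i v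
      = (∑ u, ∑ v, (if P u = i then (1:ℝ) else 0) * (if G.Adj u v then 1 else 0)) / c i := by
    intro i
    have hd1 : ∀ u, ∑ v, w i u * G.degMatrix ℝ u v * w i v
        = (G.degree u : ℝ) * (w i u * w i u) := by
      intro u
      rw [SimpleGraph.degMatrix]
      simp only [Matrix.diagonal_apply, mul_ite, ite_mul, mul_zero, zero_mul,
        Finset.sum_ite_eq, Finset.mem_univ, if_true]
      ring
    simp_rw [hd1, hwsq]
    rw [Finset.sum_div]
    refine Finset.sum_congr rfl fun u _ => ?_
    rw [hdeg u, Finset.sum_mul, Finset.sum_div]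
    refine Finset.sum_congr rfl fun v _ => ?_
    ring
  have hrowsum : ∀ i, ∑ j' : Fin k, (pairCount G (partSet P i) (partSet P j') : ℝ)
      = ∑ u, ∑ v, (if P u = i then (1:ℝ) else 0) * (if G.Adj u v then 1 else 0) := by
    intro i
    simp_rw [hEexp i]
    rw [(sum_rot_aux _).symm]
    refine Finset.sum_congr rfl fun u _ => Finset.sum_congr rfl fun v _ => ?_
    have h2 : ∑ j' : Fin k, (if P u = i then (1:ℝ) else 0) *
        ((if P v = j' then 1 else 0) * (if G.Adj u v then 1 else 0))
        = (if P u = i then (1:ℝ) else 0) * (if G.Adj u v then 1 else 0) *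
          ∑ j' : Fin k, (if P v = j' then (1:ℝ) else 0) := by
      rw [Finset.mul_sum]
      exact Finset.sum_congr rfl fun j' _ => by ring
    rw [h2]
    have h3 : ∑ j' : Fin k, (if P v = j' then (1:ℝ) else 0) = 1 := by
      rw [Finset.sum_ite_eq]
      simp
    rw [h3, mul_one]
  have hform : ∀ i, ∑ u, ∑ v, w i u * G.lapMatrix ℝ u v * w i v
      = ((∑ j' : Fin k, (pairCount G (partSet P i) (partSet P j') : ℝ))
          - (pairCount G (partSet P i) (partSet P i) : ℝ)) / c i := by
    intro i
    have h1 : ∀ u v, w i u * G.lapMatrix ℝ u v * w i v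
        = w i u * G.degMatrix ℝ u v * w i v - w i u * G.adjMatrix ℝ u v * w i v := by
      intro u v
      rw [SimpleGraph.lapMatrix, Matrix.sub_apply]
      ring
    simp_rw [h1, Finset.sum_sub_distrib]
    rw [hdiagpart, hadjpart, hrowsum, sub_div]
  -- pairing
  set F : Fin k × Fin k → ℝ :=
    fun p => (pairCount G (partSet P p.1) (partSet P p.2) : ℝ) / c p.1 with hFdef
  have hstepA : ∑ p ∈ univ.filter (fun p : Fin k × Fin k => p.1 ≠ p.2), F p
      = ∑ i, ((∑ j' : Fin k, (pairCount G (partSet P i) (partSet P j') : ℝ))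
          - (pairCount G (partSet P i) (partSet P i) : ℝ)) / c i := by
    rw [Finset.sum_filter, Fintype.sum_prod_type]
    refine Finset.sum_congr rfl fun i _ => ?_
    have h1 : (∑ j' : Fin k, (pairCount G (partSet P i) (partSet P j') : ℝ))
        - (pairCount G (partSet P i) (partSet P i) : ℝ)
        = ∑ j' ∈ univ.erase i, (pairCount G (partSet P i) (partSet P j') : ℝ) := by
      have h2 := Finset.sum_erase_add univ
        (fun j' => (pairCount G (partSet P i) (partSet P j') : ℝ)) (Finset.mem_univ i)
      linarith
    rw [h1, Finset.sum_div]
    rw [← Finset.filter_ne univ i, Finset.sum_filter]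
  have hstepB : ∑ p ∈ univ.filter (fun p : Fin k × Fin k => p.1 ≠ p.2), F p
      = ∑ p ∈ univ.filter (fun p : Fin k × Fin k => p.1 < p.2), F p
        + ∑ p ∈ univ.filter (fun p : Fin k × Fin k => p.2 < p.1), F p := by
    rw [← Finset.sum_filter_add_sum_filter_not
      (univ.filter (fun p : Fin k × Fin k => p.1 ≠ p.2)) (fun p => p.1 < p.2) F]
    congr 1
    · congr 1
      rw [Finset.filter_filter]
      apply Finset.filter_congr
      intro p _
      simp only [iff_iff_implies_and_implies]
      constructor
      · intro h; exact h.2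
      · intro h; exact ⟨h.ne, h⟩
    · congr 1
      rw [Finset.filter_filter]
      apply Finset.filter_congr
      intro p _
      simp only [iff_iff_implies_and_implies]
      constructor
      · intro h; exact h.1.lt_or_gt.resolve_left h.2
      · intro h; exact ⟨h.ne', not_lt_of_gt h⟩
  have hstepC : ∑ p ∈ univ.filter (fun p : Fin k × Fin k => p.2 < p.1), F p
      = ∑ p ∈ univ.filter (fun p : Fin k × Fin k => p.1 < p.2), F p.swap := by
    apply Finset.sum_nbij' (i := Prod.swap) (j := Prod.swap)
    · intro a ha; simp only [Finset.mem_filter, Finset.mem_univ, true_and] at *; exact ha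
    · intro a ha; simp only [Finset.mem_filter, Finset.mem_univ, true_and] at *; exact ha
    · intro a _; rfl
    · intro a _; rfl
    · intro a _; rfl
  have hpair : ∑ p ∈ univ.filter (fun p : Fin k × Fin k => p.1 < p.2),
        (pairCount G (partSet P p.1) (partSet P p.2) : ℝ) * (1 / c p.1 + 1 / c p.2)
      = ∑ i, ((∑ j' : Fin k, (pairCount G (partSet P i) (partSet P j') : ℝ))
          - (pairCount G (partSet P i) (partSet P i) : ℝ)) / c i := by
    rw [← hstepA, hstepB, hstepC, ← Finset.sum_add_distrib]
    refine Finset.sum_congr rfl fun p _ => ?_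
    simp only [hFdef, Prod.fst_swap, Prod.snd_swap]
    rw [hEsymm p.2 p.1]
    ring
  -- spectral quantities
  set y : Fin k → Fin n → ℝ := fun i j => ∑ u, U u j * w i u with hydef
  have hqf : ∀ i, ∑ u, ∑ v, w i u * G.lapMatrix ℝ u v * w i v
      = ∑ j, μ j * (y i j) ^ 2 := by
    intro i
    simp_rw [hLap]
    exact quad_aux U (w i) μ
  have hnorm : ∀ i, ∑ j, (y i j) ^ 2 = 1 := by
    intro i
    have e : ∑ j, (y i j) ^ 2 = ∑ v, ∑ v', ∑ j, (U v j * w i v) * (U v' j * w i v') := by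
      simp_rw [hydef, sq]
      exact sum_prod_sum_aux _ _
    rw [e]
    have e2 : ∀ v v', ∑ j, (U v j * w i v) * (U v' j * w i v')
        = (w i v * w i v') * ∑ j, U v j * U v' j := by
      intro v v'
      rw [Finset.mul_sum]
      exact Finset.sum_congr rfl fun j _ => by ring
    simp_rw [e2, hrow, mul_ite, mul_one, mul_zero, Finset.sum_ite_eq, Finset.mem_univ,
      if_true]
    simpa using horth i i
  have hbessel : ∀ j, ∑ i, (y i j) ^ 2 ≤ 1 := by
    intro j
    have h0 : (0:ℝ) ≤ ∑ u, (U u j - ∑ i, y i j * w i u) ^ 2 :=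
      Finset.sum_nonneg fun u _ => sq_nonneg _
    have hexp : ∑ u, (U u j - ∑ i, y i j * w i u) ^ 2
        = ∑ u, U u j * U u j - 2 * ∑ u, U u j * ∑ i, y i j * w i u
          + ∑ u, (∑ i, y i j * w i u) * (∑ i, y i j * w i u) := by
      have hterm : ∀ u, (U u j - ∑ i, y i j * w i u) ^ 2
          = U u j * U u j - 2 * (U u j * ∑ i, y i j * w i u)
            + (∑ i, y i j * w i u) * (∑ i, y i j * w i u) := fun u => by ring
      simp_rw [hterm]
      rw [Finset.sum_add_distrib, Finset.sum_sub_distrib, ← Finset.mul_sum]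
    have e1 : ∑ u, U u j * U u j = 1 := by simpa using hcol j j
    have e2 : ∑ u, U u j * ∑ i, y i j * w i u = ∑ i, (y i j) ^ 2 := by
      simp_rw [Finset.mul_sum]
      rw [Finset.sum_comm]
      refine Finset.sum_congr rfl fun i _ => ?_
      have : ∀ u, U u j * (y i j * w i u) = y i j * (U u j * w i u) := fun u => by ring
      simp_rw [this, ← Finset.mul_sum]
      have hyy : ∑ u, U u j * w i u = y i j := rfl
      rw [hyy, sq]
    have e3 : ∑ u, (∑ i, y i j * w i u) * (∑ i, y i j * w i u) = ∑ i, (y i j) ^ 2 := by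
      rw [sum_prod_sum_aux (fun i u => y i j * w i u) (fun i u => y i j * w i u)]
      have e4 : ∀ i i', ∑ u, (y i j * w i u) * (y i' j * w i' u)
          = (y i j * y i' j) * ∑ u, w i u * w i' u := by
        intro i i'
        rw [Finset.mul_sum]
        exact Finset.sum_congr rfl fun u _ => by ring
      simp_rw [e4, horth, mul_ite, mul_one, mul_zero, Finset.sum_ite_eq, Finset.mem_univ,
        if_true]
      exact Finset.sum_congr rfl fun i _ => by ring
    rw [hexp, e1, e2, e3] at h0
    linarith
  have hy0 : ∀ j, 0 ≤ ∑ i, (y i j) ^ 2 := fun j =>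
    Finset.sum_nonneg fun i _ => sq_nonneg _
  have htotal : ∑ j, ∑ i, (y i j) ^ 2 = (k : ℝ) := by
    rw [Finset.sum_comm]
    simp_rw [hnorm]
    simp
  -- the top-k index set
  set T : Finset (Fin n) := univ.filter (fun j : Fin n => n - k ≤ (j : ℕ)) with hTdef
  have hTcard : T.card = k := by
    rw [hTdef, card_top_aux]
    omega
  have hnk : n - k < n := by omega
  set θ : ℝ := lam ⟨n - k, hnk⟩ with hθdef
  have hT1 : ∀ j ∈ T, θ ≤ lam j := by
    intro j hj
    rw [hTdef, Finset.mem_filter] at hj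
    exact hmono (by simpa [Fin.le_def] using hj.2)
  have hT2 : ∀ j ∉ T, lam j ≤ θ := by
    intro j hj
    rw [hTdef, Finset.mem_filter] at hj
    simp only [Finset.mem_univ, true_and, not_le] at hj
    exact hmono (by simp [Fin.le_def]; omega)
  -- final assembly
  have key : ∑ i, ((∑ j' : Fin k, (pairCount G (partSet P i) (partSet P j') : ℝ))
          - (pairCount G (partSet P i) (partSet P i) : ℝ)) / c i
      ≤ ∑ j ∈ T, lam j := by
    have s1 : ∑ i, ((∑ j' : Fin k, (pairCount G (partSet P i) (partSet P j') : ℝ))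
          - (pairCount G (partSet P i) (partSet P i) : ℝ)) / c i
        = ∑ j, μ j * ∑ i, (y i j) ^ 2 := by
      calc ∑ i, ((∑ j' : Fin k, (pairCount G (partSet P i) (partSet P j') : ℝ))
          - (pairCount G (partSet P i) (partSet P i) : ℝ)) / c i
          = ∑ i, ∑ j, μ j * (y i j) ^ 2 :=
            Finset.sum_congr rfl fun i _ => (hform i).symm.trans (hqf i)
        _ = ∑ j, ∑ i, μ j * (y i j) ^ 2 := Finset.sum_comm
        _ = ∑ j, μ j * ∑ i, (y i j) ^ 2 :=
            Finset.sum_congr rfl fun j _ => (Finset.mul_sum _ _ _).symm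
    have s2 : ∑ j, μ j * ∑ i, (y i j) ^ 2
        = ∑ j, lam j * ∑ i, (y i (σ j)) ^ 2 := by
      rw [← Equiv.sum_comp σ (fun j => μ j * ∑ i, (y i j) ^ 2)]
      exact Finset.sum_congr rfl fun j _ => by rw [hlam]; rfl
    rw [s1, s2]
    apply thresh_aux lam (fun j => ∑ i, (y i (σ j)) ^ 2) T θ hT1 hT2
      (fun j => hy0 (σ j)) (fun j => hbessel (σ j))
    rw [Equiv.sum_comp σ (fun j => ∑ i, (y i j) ^ 2), htotal, hTcard]
  calc ∑ p ∈ Finset.univ.filter (fun p : Fin k × Fin k => p.1 < p.2),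
        (pairCount G (partSet P p.1) (partSet P p.2) : ℝ) *
          (1 / (partSet P p.1).card + 1 / (partSet P p.2).card)
      = ∑ p ∈ univ.filter (fun p : Fin k × Fin k => p.1 < p.2),
        (pairCount G (partSet P p.1) (partSet P p.2) : ℝ) * (1 / c p.1 + 1 / c p.2) := rfl
    _ = ∑ i, ((∑ j' : Fin k, (pairCount G (partSet P i) (partSet P j') : ℝ))
          - (pairCount G (partSet P i) (partSet P i) : ℝ)) / c i := hpair
    _ ≤ ∑ j ∈ T, lam j := key
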